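/- arXiv:0811.3077 — 3 statements merged into one kernel-verified Lean document; each statement's English description precedes it below -/
import Mathlib

section
/- Suppose H = H_ref + R + R† with [R, M] = R and [H_ref, M] = 0. Let Φ be a vector with M Φ = μ Φ, R R† Φ = ξ Φ, (R†)² Φ = 0, R Φ = 0, H_ref Φ = (μ + k) Φ, and H_ref (R† Φ) = (μ + α + k + Δk) (R† Φ) for scalars μ, ξ, k, Δk, α ∈ ℂ. If h ∈ ℂ satisfies ξ h² - (α + Δk) h - 1 = 0, then Ψ = Φ + h (R† Φ) satisfies H Ψ = (μ + k + h ξ) Ψ. -/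
theorem doublet_construction
    {V : Type*} [NormedAddCommGroup V] [InnerProductSpace ℂ V] [FiniteDimensional ℂ V]
    (H Href M R : V →ₗ[ℂ] V)
    (hH : H = Href + R + LinearMap.adjoint R)
    (hRM : R * M - M * R = R)
    (hHref : Href * M = M * Href)
    (Φ : V) (hΦ : Φ ≠ 0)
    (μ ξ k Δk α h : ℂ)
    (hMΦ : M Φ = μ • Φ)
    (hRRd : (R * LinearMap.adjoint R) Φ = ξ • Φ)
    (hRd2 : (LinearMap.adjoint R * LinearMap.adjoint R) Φ = 0)
    (hRΦ : R Φ = 0)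
    (hHrefΦ : Href Φ = (μ + k) • Φ)
    (hHrefRdΦ : Href (LinearMap.adjoint R Φ) = (μ + α + k + Δk) • (LinearMap.adjoint R Φ))
    (hquad : ξ * h ^ 2 - (α + Δk) * h - 1 = 0) :
    H (Φ + h • LinearMap.adjoint R Φ)
      = (μ + k + h * ξ) • (Φ + h • LinearMap.adjoint R Φ) := by
  have h1 : R (LinearMap.adjoint R Φ) = ξ • Φ := hRRd
  have h2 : LinearMap.adjoint R (LinearMap.adjoint R Φ) = 0 := hRd2
  simp only [hH, LinearMap.add_apply, map_add, map_smul, h1, h2, hRΦ, hHrefΦ, hHrefRdΦ,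
    smul_zero, add_zero, smul_smul, smul_add]
  match_scalars
  · ring
  · linear_combination -hquad
end

section
/- Let H = H_ref + R + R† where H_ref = α M on the relevant subspace, [R,M] = R, M self-adjoint. Suppose Ψ = ψ₁ + ψ₂ with M ψ₁ = ν ψ₁, M ψ₂ = (ν+1) ψ₂, R ψ₁ = 0, R† ψ₂ = 0, (H_ref − αM)ψ₁ = 0, (H_ref − αM)ψ₂ = 0, and H Ψ = μ Ψ. If z ∈ ℂ satisfies e^z = −(να − μ)/(να − μ + α) (assuming να − μ + α ≠ 0), then Φ = e^{−z ν} ψ₁ + e^{−z(ν+1)} ψ₂ is also an eigenvector of H, with eigenvalue μ' = να + (να + α − μ). -/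
theorem partner_eigenvector_via_exp
    {V : Type*} [NormedAddCommGroup V] [InnerProductSpace ℂ V] [FiniteDimensional ℂ V]
    (H Href M R : V →ₗ[ℂ] V)
    (hH : H = Href + R + LinearMap.adjoint R)
    (hRM : R * M - M * R = R)
    (hMsa : LinearMap.adjoint M = M)
    (ψ₁ ψ₂ : V) (hne : ¬(ψ₁ = 0 ∧ ψ₂ = 0))
    (ν α μ : ℂ) (z : ℂ)
    (hM1 : M ψ₁ = ν • ψ₁)
    (hM2 : M ψ₂ = (ν + 1) • ψ₂)
    (hR1 : R ψ₁ = 0)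
    (hR2 : LinearMap.adjoint R ψ₂ = 0)
    (hHref1 : Href ψ₁ - α • M ψ₁ = 0)
    (hHref2 : Href ψ₂ - α • M ψ₂ = 0)
    (hEig : H (ψ₁ + ψ₂) = μ • (ψ₁ + ψ₂))
    (hden : ν * α - μ + α ≠ 0)
    (hz : Complex.exp z = -(ν * α - μ) / (ν * α - μ + α)) :
    H (Complex.exp (-z * ν) • ψ₁ + Complex.exp (-z * (ν + 1)) • ψ₂)
      = (ν * α + (ν * α + α - μ)) •
        (Complex.exp (-z * ν) • ψ₁ + Complex.exp (-z * (ν + 1)) • ψ₂) := by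
  set a := Complex.exp (-z * ν) with ha
  set b := Complex.exp (-z * (ν + 1)) with hb
  set E := Complex.exp z with hE
  have hab : a = b * E := by
    rw [ha, hb, hE, ← Complex.exp_add]; ring_nf
  have hzE : E * (ν * α - μ + α) = μ - ν * α := by
    rw [hz]; field_simp; ring
  -- adjoint commutation relation
  have hadj : M * LinearMap.adjoint R - LinearMap.adjoint R * M = LinearMap.adjoint R := by
    have h := congrArg star hRM
    rw [star_sub, star_mul, star_mul] at h
    simpa [LinearMap.star_eq_adjoint, hMsa] using h
  -- Href values
  have href1 : Href ψ₁ = (α * ν) • ψ₁ := by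
    have := sub_eq_zero.mp hHref1
    rw [this, hM1, smul_smul]
  have href2 : Href ψ₂ = (α * (ν + 1)) • ψ₂ := by
    have := sub_eq_zero.mp hHref2
    rw [this, hM2, smul_smul]
  set u := LinearMap.adjoint R ψ₁ with hu_def
  set v := R ψ₂ with hv_def
  -- eigenvalue relations for u and v under M
  have hu : M u = (ν + 1) • u := by
    have h := congrArg (fun f : V →ₗ[ℂ] V => f ψ₁) hadj
    simp only [LinearMap.sub_apply, Module.End.mul_apply, hM1, map_smul] at h
    rw [← hu_def] at h
    linear_combination (norm := module) h
  have hv : M v = ν • v := by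
    have h := congrArg (fun f : V →ₗ[ℂ] V => f ψ₂) hRM
    simp only [LinearMap.sub_apply, Module.End.mul_apply, hM2, map_smul] at h
    rw [← hv_def] at h
    linear_combination (norm := module) -h
  -- expand the eigenvalue equation
  have hE1 : (α * ν) • ψ₁ + (α * (ν + 1)) • ψ₂ + v + u = μ • ψ₁ + μ • ψ₂ := by
    have h := hEig
    rw [hH] at h
    simp only [LinearMap.add_apply, map_add, hR1, hR2, href1, href2, smul_add] at h
    rw [← hu_def, ← hv_def] at h
    linear_combination (norm := module) h
  have hE2 := congrArg M hE1
  simp only [map_add, map_smul, hM1, hM2, hu, hv] at hE2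
  have hu' : u = (μ - α * (ν + 1)) • ψ₂ := by
    linear_combination (norm := module) hE2 - ν • hE1
  have hv' : v = (μ - α * ν) • ψ₁ := by
    linear_combination (norm := module) hE1 - hu'
  -- compute H on the new vector
  have key : H (a • ψ₁ + b • ψ₂)
      = (a * (α * ν) + b * (μ - α * ν)) • ψ₁
        + (b * (α * (ν + 1)) + a * (μ - α * (ν + 1))) • ψ₂ := by
    rw [hH]
    simp only [LinearMap.add_apply, map_add, map_smul, hR1, hR2, href1, href2,
      ← hu_def, ← hv_def, hu', hv', smul_zero, smul_smul]
    module
  rw [key]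
  match_scalars
  · linear_combination -b * hzE - (ν * α + α - μ) * hab
  · linear_combination (μ - α * ν - α) * hab - b * hzE
end

section
/- The three eigenvalues of the ⟨1,2,2⟩ triplet of the 4-site half-filled Hubbard ring are the roots of the cubic ε³ − 2α ε² + (α² − 16) ε + 12α = 0 (equivalently, a real cubic with root-sum 2α); for every real α this cubic has three distinct real roots, hence no crossing occurs within the triplet. -/
private lemma ivt_neg_pos (f : ℝ → ℝ) (hf : Continuous f) {a b : ℝ} (hab : a < b)
    (ha : f a < 0) (hb : 0 < f b) : ∃ c, a < c ∧ c < b ∧ f c = 0 := by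
  obtain ⟨c, hc, hc0⟩ := intermediate_value_Ioo hab.le hf.continuousOn ⟨ha, hb⟩
  exact ⟨c, hc.1, hc.2, hc0⟩

private lemma ivt_pos_neg (f : ℝ → ℝ) (hf : Continuous f) {a b : ℝ} (hab : a < b)
    (ha : 0 < f a) (hb : f b < 0) : ∃ c, a < c ∧ c < b ∧ f c = 0 := by
  obtain ⟨c, hc, hc0⟩ := intermediate_value_Ioo' hab.le hf.continuousOn ⟨hb, ha⟩
  exact ⟨c, hc.1, hc.2, hc0⟩

theorem triplet_cubic_three_distinct_real_roots (α : ℝ) :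
    ∃ x y z : ℝ, x ≠ y ∧ y ≠ z ∧ x ≠ z ∧
      x ^ 3 - 2 * α * x ^ 2 + (α ^ 2 - 16) * x + 12 * α = 0 ∧
      y ^ 3 - 2 * α * y ^ 2 + (α ^ 2 - 16) * y + 12 * α = 0 ∧
      z ^ 3 - 2 * α * z ^ 2 + (α ^ 2 - 16) * z + 12 * α = 0 := by
  set p : ℝ → ℝ := fun ε => ε ^ 3 - 2 * α * ε ^ 2 + (α ^ 2 - 16) * ε + 12 * α with hp
  have hcont : Continuous p := by fun_prop
  set M : ℝ := |α| + 5 with hM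
  have hα1 : α ≤ |α| := le_abs_self α
  have hα2 : -|α| ≤ α := neg_abs_le α
  have h0 : (0:ℝ) ≤ |α| := abs_nonneg α
  have hM5 : (5:ℝ) ≤ M := by simp [hM]
  have hv1 : p (α - M) < 0 := by
    simp only [hp]
    nlinarith [sq_nonneg M, sq_nonneg (M - 5), mul_nonneg h0 h0, sq_nonneg α]
  have hv2 : p (α - 2) = 24 := by simp only [hp]; ring
  have hv3 : p (α + 2) = -24 := by simp only [hp]; ring
  have hv4 : 0 < p (α + M) := by
    simp only [hp]
    nlinarith [sq_nonneg M, sq_nonneg (M - 5), mul_nonneg h0 h0, sq_nonneg α]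
  obtain ⟨x, hx1, hx2, hx0⟩ := ivt_neg_pos p hcont (by linarith : α - M < α - 2) hv1 (by rw [hv2]; norm_num)
  obtain ⟨y, hy1, hy2, hy0⟩ := ivt_pos_neg p hcont (by linarith : α - 2 < α + 2) (by rw [hv2]; norm_num) (by rw [hv3]; norm_num)
  obtain ⟨z, hz1, hz2, hz0⟩ := ivt_neg_pos p hcont (by linarith : α + 2 < α + M) (by rw [hv3]; norm_num) hv4
  exact ⟨x, y, z, by linarith, by linarith, by linarith, hx0, hy0, hz0⟩
end
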